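/- Let A, Z ∈ {0,1} and W on a finite probability space with 0 < P(Z=1|W) < 1 a.s. and δ(W) := E[A|W,Z=1] − E[A|W,Z=0] ≠ 0 a.s. Let D be any bounded random variable and define Ψ(W,z) := E[ D · (−1)^{1−A} f*(A|W) / δ(W) | W, Z=z ] for a fixed f*(·|W) ∈ (0,1), and Ψ̃(W) := Ψ(W,1) − Ψ(W,0), ε := A − E[A|W,Z]. Then E[ (−1)^{1−Z} Ψ(W,Z)/P(Z|W) − Ψ̃(W) − ε Ψ̃(W) · (−1)^{1−Z} / ( P(Z|W) δ(W) ) | W ] = 0 almost surely. -/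
import Mathlib


open Finset
open scoped Classical BigOperators

noncomputable section

variable {Ω : Type}

/-- Expectation of `f` under pmf `p` on a finite sample space. -/
def E [Fintype Ω] (p f : Ω → ℝ) : ℝ := ∑ ω, p ω * f ω

/-- Probability of the event `s` under pmf `p`. -/
def Pr [Fintype Ω] (p : Ω → ℝ) (s : Ω → Prop) : ℝ := ∑ ω, if s ω then p ω else 0

/-- Conditional expectation of `f` given the event `s`. -/
def CE [Fintype Ω] (p f : Ω → ℝ) (s : Ω → Prop) : ℝ :=
  (∑ ω, if s ω then p ω * f ω else 0) / Pr p s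

/-- The realized instrument propensity P(Z = Z(ω) | W = W(ω)). -/
def PZ {β : Type} [Fintype Ω] (p : Ω → ℝ) (W : Ω → β) (Z : Ω → ℝ) (ω : Ω) : ℝ :=
  Pr p (fun ω' => W ω' = W ω ∧ Z ω' = Z ω) / Pr p (fun ω' => W ω' = W ω)

/-- The sign (−1)^{1−X(ω)} for a {0,1}-valued variable X. -/
def sgn (X : Ω → ℝ) (ω : Ω) : ℝ := if X ω = 1 then 1 else -1

set_option maxHeartbeats 1600000

/-- Single-period mean-zero property of the augmentation term in the influence
function of Lemma 3 when all nuisance functions are correctly specified. -/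
theorem stmt12 {β : Type} [Fintype Ω]
    (p : Ω → ℝ) (hp0 : ∀ ω, 0 ≤ p ω) (hp1 : ∑ ω, p ω = 1)
    (A Z D : Ω → ℝ) (W : Ω → β)
    (hA : ∀ ω, A ω = 0 ∨ A ω = 1) (hZ : ∀ ω, Z ω = 0 ∨ Z ω = 1)
    (hposW : ∀ ω, 0 < p ω → 0 < Pr p (fun ω' => W ω' = W ω))
    (hposWZ : ∀ ω, 0 < p ω → ∀ z : ℝ, z = 0 ∨ z = 1 →
      0 < Pr p (fun ω' => W ω' = W ω ∧ Z ω' = z))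
    (δ : β → ℝ)
    (hδdef : ∀ ω, 0 < p ω →
      δ (W ω) = CE p A (fun ω' => W ω' = W ω ∧ Z ω' = 1)
        - CE p A (fun ω' => W ω' = W ω ∧ Z ω' = 0))
    (hδne : ∀ ω, 0 < p ω → δ (W ω) ≠ 0)
    (fstar : ℝ → β → ℝ)
    (hfrange : ∀ w a, a = 0 ∨ a = 1 → 0 < fstar a w ∧ fstar a w < 1)
    -- Ψ(W,z) := E[D·(−1)^{1−A} f*(A|W)/δ(W) | W, Z=z]
    (Ψ : β → ℝ → ℝ)
    (hΨ : ∀ ω, 0 < p ω → ∀ z : ℝ, z = 0 ∨ z = 1 →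
      Ψ (W ω) z = CE p (fun ω' => D ω' * sgn A ω' * fstar (A ω') (W ω') / δ (W ω'))
        (fun ω' => W ω' = W ω ∧ Z ω' = z)) :
    ∀ ω, 0 < p ω →
      CE p (fun ω' =>
          sgn Z ω' * Ψ (W ω') (Z ω') / PZ p W Z ω'
          - (Ψ (W ω') 1 - Ψ (W ω') 0)
          - (A ω' - CE p A (fun ω'' => W ω'' = W ω' ∧ Z ω'' = Z ω'))
            * (Ψ (W ω') 1 - Ψ (W ω') 0) * sgn Z ω'
            / (PZ p W Z ω' * δ (W ω')))
        (fun ω' => W ω' = W ω) = 0 := by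

  intro ω hpω
  have hPw : 0 < Pr p (fun ω' => W ω' = W ω) := hposW ω hpω
  have hP1 : 0 < Pr p (fun ω' => W ω' = W ω ∧ Z ω' = 1) := hposWZ ω hpω 1 (Or.inr rfl)
  have hP0 : 0 < Pr p (fun ω' => W ω' = W ω ∧ Z ω' = 0) := hposWZ ω hpω 0 (Or.inl rfl)
  have hd : δ (W ω) ≠ 0 := hδne ω hpω
  have hsum : Pr p (fun ω' => W ω' = W ω ∧ Z ω' = 1)
      + Pr p (fun ω' => W ω' = W ω ∧ Z ω' = 0)
      = Pr p (fun ω' => W ω' = W ω) := by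
    unfold Pr
    rw [← Finset.sum_add_distrib]
    refine Finset.sum_congr rfl fun ω' _ => ?_
    rcases hZ ω' with hz | hz <;> by_cases hW : W ω' = W ω <;> simp [hW, hz]
  have hSA1 : (∑ ω', if W ω' = W ω ∧ Z ω' = (1:ℝ) then p ω' * A ω' else 0)
      = CE p A (fun ω' => W ω' = W ω ∧ Z ω' = 1)
        * Pr p (fun ω' => W ω' = W ω ∧ Z ω' = 1) := by
    rw [CE, div_mul_cancel₀ _ (ne_of_gt hP1)]
    exact Finset.sum_congr rfl fun x _ => by congr
  have hSA0 : (∑ ω', if W ω' = W ω ∧ Z ω' = (0:ℝ) then p ω' * A ω' else 0)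
      = CE p A (fun ω' => W ω' = W ω ∧ Z ω' = 0)
        * Pr p (fun ω' => W ω' = W ω ∧ Z ω' = 0) := by
    rw [CE, div_mul_cancel₀ _ (ne_of_gt hP0)]
    exact Finset.sum_congr rfl fun x _ => by congr
  rw [CE, div_eq_zero_iff]
  left
  have key : (∑ ω', ((if W ω' = W ω ∧ Z ω' = (1:ℝ) then p ω' else 0)
        * (Ψ (W ω) 1 / (Pr p (fun a => W a = W ω ∧ Z a = 1) / Pr p (fun a => W a = W ω))
            - (Ψ (W ω) 1 - Ψ (W ω) 0))
      + (if W ω' = W ω ∧ Z ω' = (0:ℝ) then p ω' else 0)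
        * (-(Ψ (W ω) 0 / (Pr p (fun a => W a = W ω ∧ Z a = 0) / Pr p (fun a => W a = W ω)))
            - (Ψ (W ω) 1 - Ψ (W ω) 0))
      - (if W ω' = W ω ∧ Z ω' = (1:ℝ) then p ω' * A ω' else 0)
        * ((Ψ (W ω) 1 - Ψ (W ω) 0)
            / (Pr p (fun a => W a = W ω ∧ Z a = 1) / Pr p (fun a => W a = W ω) * δ (W ω)))
      + (if W ω' = W ω ∧ Z ω' = (1:ℝ) then p ω' else 0)
        * (CE p A (fun a => W a = W ω ∧ Z a = 1)
            * ((Ψ (W ω) 1 - Ψ (W ω) 0)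
              / (Pr p (fun a => W a = W ω ∧ Z a = 1) / Pr p (fun a => W a = W ω) * δ (W ω))))
      - (if W ω' = W ω ∧ Z ω' = (0:ℝ) then p ω' * A ω' else 0)
        * (-((Ψ (W ω) 1 - Ψ (W ω) 0)
            / (Pr p (fun a => W a = W ω ∧ Z a = 0) / Pr p (fun a => W a = W ω) * δ (W ω))))
      + (if W ω' = W ω ∧ Z ω' = (0:ℝ) then p ω' else 0)
        * (CE p A (fun a => W a = W ω ∧ Z a = 0)
            * (-((Ψ (W ω) 1 - Ψ (W ω) 0)
              / (Pr p (fun a => W a = W ω ∧ Z a = 0) / Pr p (fun a => W a = W ω) * δ (W ω))))))) = 0 := by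
    simp only [Finset.sum_add_distrib, Finset.sum_sub_distrib, ← Finset.sum_mul]
    rw [show (∑ ω', if W ω' = W ω ∧ Z ω' = (1:ℝ) then p ω' else 0)
        = Pr p (fun a => W a = W ω ∧ Z a = 1) from by
          rw [Pr]; exact Finset.sum_congr rfl fun x _ => by congr,
      show (∑ ω', if W ω' = W ω ∧ Z ω' = (0:ℝ) then p ω' else 0)
        = Pr p (fun a => W a = W ω ∧ Z a = 0) from by
          rw [Pr]; exact Finset.sum_congr rfl fun x _ => by congr,
      hSA1, hSA0, ← hsum]
    have h01 : (0:ℝ) < Pr p (fun ω' => W ω' = W ω ∧ Z ω' = 1)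
        + Pr p (fun ω' => W ω' = W ω ∧ Z ω' = 0) := by linarith
    field_simp
    ring
  refine Eq.trans (Finset.sum_congr rfl fun ω' _ => ?_) key
  by_cases hW : W ω' = W ω
  · rcases hZ ω' with hz | hz
    · simp only [PZ, sgn, hW, hz, eq_self_iff_true, zero_ne_one, one_ne_zero, and_true,
        and_false, if_true, if_false, true_and, false_and, ite_true, ite_false]
      ring
    · simp only [PZ, sgn, hW, hz, eq_self_iff_true, zero_ne_one, one_ne_zero, and_true,
        and_false, if_true, if_false, true_and, false_and, ite_true, ite_false]
      ring
  · simp only [hW, false_and, if_false, ite_false]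
    ring
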